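/- Let ℓ be an odd prime, let p and q be coprime positive integers with ℓ ∣ p and p ≥ 4q + 1, and let K be a field of characteristic ℓ. If α ∈ K is nonzero and the image in K[X] of the formal derivative of Φ_{p,q} vanishes at α, then either α^{4q} = 1 or 2α^{4q} − α^{2q} + 2 = 0 (equivalently, α^{2q} + α^{−2q} = 1/2). -/

import Mathlib

open Polynomial

/-- The polynomial `Φ_{p,q} = X^{2p} - X^{p+4q} + X^{p+2q} + 2X^p + X^{p-2q} - X^{p-4q} + 1`. -/
noncomputable def Phi (p q : ℕ) : Polynomial ℤ :=
  X ^ (2 * p) - X ^ (p + 4 * q) + X ^ (p + 2 * q) + 2 * X ^ p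
    + X ^ (p - 2 * q) - X ^ (p - 4 * q) + 1

/-- Let `ℓ` be an odd prime, `p, q` coprime positive integers with `ℓ ∣ p`,
`p ≥ 4q + 1`, and `K` a field of characteristic `ℓ`. If `α ∈ K` is nonzero and the image
in `K[X]` of the formal derivative of `Φ_{p,q}` vanishes at `α`, then `α^{4q} = 1` or
`2α^{4q} - α^{2q} + 2 = 0`. -/
theorem roots_of_derivative_Phi_char_ell
    (ℓ : ℕ) (hℓ : ℓ.Prime) (hℓodd : Odd ℓ)
    (p q : ℕ) (hp : 0 < p) (hq : 0 < q) (hco : Nat.Coprime p q)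
    (hdvd : ℓ ∣ p) (hge : 4 * q + 1 ≤ p)
    (K : Type*) [Field K] [CharP K ℓ]
    (α : K) (hα : α ≠ 0)
    (hroot : Polynomial.aeval α (Polynomial.derivative (Phi p q)) = 0) :
    α ^ (4 * q) = 1 ∨ 2 * α ^ (4 * q) - α ^ (2 * q) + 2 = 0 := by
  -- ℓ does not divide q nor 2
  have hlq : ¬ ℓ ∣ q := by
    intro h
    have h1 : ℓ ∣ Nat.gcd p q := Nat.dvd_gcd hdvd h
    rw [hco] at h1
    exact hℓ.one_lt.ne' (Nat.dvd_one.mp h1)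
  have hl2 : ¬ ℓ ∣ 2 := by
    intro h
    have : ℓ = 2 := (Nat.prime_dvd_prime_iff_eq hℓ Nat.prime_two).mp h
    rw [this] at hℓodd
    exact (Nat.not_odd_iff_even.mpr (by decide)) hℓodd
  have h2q : (2 * (q : K)) ≠ 0 := by
    have : ((2 * q : ℕ) : K) ≠ 0 := by
      rw [Ne, CharP.cast_eq_zero_iff K ℓ]
      intro h
      rcases (Nat.Prime.dvd_mul hℓ).mp h with h | h
      · exact hl2 h
      · exact hlq h
    push_cast at this
    exact this
  obtain ⟨m, rfl⟩ : ∃ m, p = m + (4*q+1) := ⟨p - (4*q+1), by omega⟩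
  have hc : ((m : K) + (4*(q:K)+1)) = 0 := by
    have : ((m + (4*q+1) : ℕ) : K) = 0 := (CharP.cast_eq_zero_iff K ℓ _).mpr hdvd
    push_cast at this
    linear_combination this
  have e1 : m + (4*q+1) - 2*q = m + 2*q + 1 := by omega
  have e2 : m + (4*q+1) - 4*q = m + 1 := by omega
  have e3 : 2 * (m + (4*q+1)) = 2*m + 8*q + 2 := by omega
  have e4 : m + (4*q+1) + 4*q = m + 8*q + 1 := by omega
  have e5 : m + (4*q+1) + 2*q = m + 6*q + 1 := by omega
  rw [Phi, e1, e2, e3, e4, e5] at hroot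
  simp only [derivative_add, derivative_sub, derivative_one, derivative_X_pow, derivative_mul,
    derivative_ofNat, Nat.add_sub_cancel, map_add, map_sub, map_mul, map_pow, map_natCast,
    aeval_X, map_ofNat, map_zero, zero_mul, add_zero, mul_zero, map_one] at hroot
  have e6 : 2*m + 8*q + 2 - 1 = 2*m + 8*q + 1 := by omega
  have e7 : m + (4*q+1) - 1 = m + 4*q := by omega
  rw [e6, e7] at hroot
  push_cast at hroot
  have key : α ^ m * ((2 * (q:K)) * ((α^(4*q) - 1) * (2*α^(4*q) - α^(2*q) + 2))) = 0 := by
    linear_combination (-1:K) * hroot +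
      (2*α^(2*m+8*q+1) - α^(m+8*q) + α^(m+6*q) + 2*α^(m+4*q) + α^(m+2*q) - α^m) * hc
  have hm : α ^ m ≠ 0 := pow_ne_zero _ hα
  have prod0 : (α^(4*q) - 1) * (2*α^(4*q) - α^(2*q) + 2) = 0 := by
    rcases mul_eq_zero.mp key with h | h
    · exact absurd h hm
    rcases mul_eq_zero.mp h with h | h
    · exact absurd h h2q
    · exact h
  rcases mul_eq_zero.mp prod0 with h | h
  · left; exact sub_eq_zero.mp h
  · right; exact h
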